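/- Let h : [R₀, ∞) → ℝ be a C¹ positive function and ρ : [R₀, ∞) → (0, ∞) with ρ(R) ≥ R^a for some a > 1, satisfying 0 < −h'(R) ≤ 2h(R)/ρ(R) for all R ≥ R₀. Define u(R) = 2h(R₀) − h(R). Then h is decreasing, u is increasing with u(R₀) = h(R₀) > 0 and 0 < u'(R) ≤ 2u(R)/ρ(R) for R ≥ R₀, and lim_{R→∞} u(R) ≤ h(R₀)·exp(2/((a−1)R₀^{a−1})). In particular, if R₀ is large enough that exp(2/((a−1)R₀^{a−1})) < 2, then h cannot tend to 0 at infinity while satisfying the differential inequality, since lim u = 2h(R₀) would be forced but lim u < 2h(R₀). -/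

import Mathlib

open Filter

/-- Gronwall contradiction in the finiteness proof for asymptotic critical values:
if `h > 0` is `C¹` on `[R₀, ∞)` with `0 < -h' ≤ 2h/ρ` where `ρ R ≥ R^a`, `a > 1`,
and `u := 2 h R₀ - h`, then `h` is antitone, `u` is monotone with `u R₀ = h R₀ > 0`
and `0 < u' ≤ 2u/ρ`, and `u ≤ h R₀ · exp (2/((a-1) R₀^(a-1)))` everywhere; in
particular if `exp (2/((a-1) R₀^(a-1))) < 2` then `h` cannot tend to `0` at
infinity. -/
theorem stmt_15 (R₀ a : ℝ) (hR₀ : 0 < R₀) (ha : 1 < a)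
    (h h' : ℝ → ℝ) (ρ : ℝ → ℝ)
    (hderiv : ∀ R, R₀ ≤ R → HasDerivAt h (h' R) R)
    (hcont : ContinuousOn h' (Set.Ici R₀))
    (hpos : ∀ R, R₀ ≤ R → 0 < h R)
    (hρ : ∀ R, R₀ ≤ R → 0 < ρ R ∧ R ^ a ≤ ρ R)
    (hineq : ∀ R, R₀ ≤ R → 0 < -h' R ∧ -h' R ≤ 2 * h R / ρ R) :
    (∀ R₁ R₂, R₀ ≤ R₁ → R₁ < R₂ → h R₂ < h R₁) ∧
    (∀ R₁ R₂, R₀ ≤ R₁ → R₁ < R₂ → 2 * h R₀ - h R₁ < 2 * h R₀ - h R₂) ∧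
    (2 * h R₀ - h R₀ = h R₀ ∧ 0 < h R₀) ∧
    (∀ R, R₀ ≤ R → 0 < -h' R ∧ -h' R ≤ 2 * (2 * h R₀ - h R) / ρ R) ∧
    (∀ R, R₀ ≤ R →
      2 * h R₀ - h R ≤ h R₀ * Real.exp (2 / ((a - 1) * R₀ ^ (a - 1)))) ∧
    (Real.exp (2 / ((a - 1) * R₀ ^ (a - 1))) < 2 →
      ¬ Tendsto h atTop (nhds 0)) := by
  have hcontOn : ContinuousOn h (Set.Ici R₀) := fun x hx =>
    (hderiv x hx).continuousAt.continuousWithinAt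
  have hSA : StrictAntiOn h (Set.Ici R₀) := by
    apply strictAntiOn_of_deriv_neg (convex_Ici R₀) hcontOn
    intro x hx
    rw [interior_Ici] at hx
    rw [(hderiv x (le_of_lt hx)).deriv]
    have := (hineq x (le_of_lt hx)).1
    linarith
  have hanti : ∀ R₁ R₂, R₀ ≤ R₁ → R₁ < R₂ → h R₂ < h R₁ := fun R₁ R₂ h1 h12 =>
    hSA h1 (le_trans h1 h12.le) h12
  have hle : ∀ R, R₀ ≤ R → h R ≤ h R₀ := by
    intro R hR
    rcases eq_or_lt_of_le hR with rfl | hR'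
    · exact le_rfl
    · exact (hanti R₀ R le_rfl hR').le
  have hupos : ∀ R, R₀ ≤ R → 0 < 2 * h R₀ - h R := by
    intro R hR
    have := hle R hR
    have := hpos R₀ le_rfl
    linarith
  -- part (iv): u inequality
  have hiv : ∀ R, R₀ ≤ R → 0 < -h' R ∧ -h' R ≤ 2 * (2 * h R₀ - h R) / ρ R := by
    intro R hR
    refine ⟨(hineq R hR).1, le_trans (hineq R hR).2 ?_⟩
    have hρp := (hρ R hR).1
    have := hle R hR
    have hup := hupos R hR
    have hh := hpos R hR
    apply div_le_div_of_nonneg_right ?_ hρp.le |>.trans_eq rfl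
    · linarith
  -- Gronwall bound
  set C : ℝ := 2 / ((a - 1) * R₀ ^ (a - 1)) with hC
  have hgron : ∀ R, R₀ ≤ R → 2 * h R₀ - h R ≤ h R₀ * Real.exp C := by
    intro R hR
    set u : ℝ → ℝ := fun R => 2 * h R₀ - h R with hu
    set g : ℝ → ℝ := fun R => Real.log (u R) + (2 / (a - 1)) * R ^ (1 - a) with hg
    have hgderiv : ∀ x, R₀ ≤ x →
        HasDerivAt g (-h' x / u x + (2 / (a - 1)) * ((1 - a) * x ^ (1 - a - 1))) x := by
      intro x hx
      have hx0 : 0 < x := lt_of_lt_of_le hR₀ hx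
      have h1 : HasDerivAt u (-h' x) x := by
        simpa using (hderiv x hx).const_sub (2 * h R₀)
      have h2 : HasDerivAt (fun R => Real.log (u R)) (-h' x / u x) x :=
        h1.log (hupos x hx).ne'
      have h3 : HasDerivAt (fun R : ℝ => R ^ (1 - a)) ((1 - a) * x ^ (1 - a - 1)) x :=
        Real.hasDerivAt_rpow_const (Or.inl hx0.ne')
      exact h2.add (h3.const_mul _)
    have hganti : AntitoneOn g (Set.Ici R₀) := by
      apply antitoneOn_of_deriv_nonpos (convex_Ici R₀)
      · exact fun x hx => (hgderiv x hx).continuousAt.continuousWithinAt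
      · intro x hx
        rw [interior_Ici] at hx
        exact (hgderiv x hx.le).differentiableAt.differentiableWithinAt
      · intro x hx
        rw [interior_Ici] at hx
        have hx' : R₀ ≤ x := hx.le
        have hx0 : 0 < x := lt_of_lt_of_le hR₀ hx'
        rw [(hgderiv x hx').deriv]
        have hup := hupos x hx'
        have hρp := (hρ x hx').1
        have hρa := (hρ x hx').2
        have hxa : 0 < x ^ a := Real.rpow_pos_of_pos hx0 a
        have key : -h' x / u x ≤ 2 * x ^ (-a) := by
          have h4 : -h' x ≤ 2 * u x / ρ x := (hiv x hx').2
          have h5 : 2 * u x / ρ x ≤ 2 * u x / x ^ a :=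
            div_le_div_of_nonneg_left (by positivity) hxa hρa
          have h6 : -h' x / u x ≤ (2 * u x / x ^ a) / u x := by
            exact div_le_div_of_nonneg_right (h4.trans h5) hup.le |>.trans_eq rfl
          calc -h' x / u x ≤ (2 * u x / x ^ a) / u x := h6
            _ = 2 / x ^ a := by field_simp; ring_nf; exact mul_inv_cancel₀ hup.ne'
            _ = 2 * x ^ (-a) := by rw [Real.rpow_neg hx0.le]; ring
        have hxa' : x ^ (1 - a - 1) = x ^ (-a) := by norm_num
        rw [hxa']
        have ha1 : a - 1 ≠ 0 := by linarith
        have : (2 / (a - 1)) * ((1 - a) * x ^ (-a)) = -(2 * x ^ (-a)) := by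
          field_simp
          ring
        rw [this]
        linarith
    have hgR : g R ≤ g R₀ := hganti Set.self_mem_Ici hR hR
    have huR0 : u R₀ = h R₀ := by simp [hu]; ring
    have hlogle : Real.log (u R) ≤ Real.log (h R₀) + C := by
      have hR1a : (0:ℝ) < R ^ (1 - a) :=
        Real.rpow_pos_of_pos (lt_of_lt_of_le hR₀ hR) _
      have hfac : (0:ℝ) < 2 / (a - 1) := div_pos two_pos (by linarith)
      have hCeq : C = (2 / (a - 1)) * R₀ ^ (1 - a) := by
        rw [hC, show (1 - a) = -(a-1) by ring, Real.rpow_neg hR₀.le]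
        field_simp
      have := hgR
      simp only [hg, huR0] at this
      nlinarith [mul_pos hfac hR1a]
    calc u R = Real.exp (Real.log (u R)) := (Real.exp_log (hupos R hR)).symm
      _ ≤ Real.exp (Real.log (h R₀) + C) := Real.exp_le_exp.2 hlogle
      _ = h R₀ * Real.exp C := by rw [Real.exp_add, Real.exp_log (hpos R₀ le_rfl)]
  refine ⟨hanti, fun R₁ R₂ h1 h12 => by linarith [hanti R₁ R₂ h1 h12],
    ⟨by ring, hpos R₀ le_rfl⟩, hiv, hgron, ?_⟩
  intro hE htend
  have hlim : Tendsto (fun R => 2 * h R₀ - h R) atTop (nhds (2 * h R₀ - 0)) :=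
    (tendsto_const_nhds.sub htend)
  have : 2 * h R₀ - 0 ≤ h R₀ * Real.exp C := by
    apply le_of_tendsto hlim
    filter_upwards [eventually_ge_atTop R₀] with R hR using hgron R hR
  have h0 := hpos R₀ le_rfl
  nlinarith
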